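/- Let P ⊂ ℝ^d be a full-dimensional simple convex polytope with n facets, normal fan Σ_P, and ray generator matrix U ∈ ℝ^{n×d}. Let Δ ⊆ P be a face of codimension k, let T_Δ be an invertible d×d matrix such that the rows of U·T_Δ indexed by the facets of P containing Δ are e₁,…,e_k, set c_Δ = |det T_Δ|, and let U_Δ be the submatrix of U·T_Δ consisting of the last d−k columns and the rows indexed by facets Q for which Q ∩ Δ is a facet of Δ; U_Δ is a ray matrix for the normal fan of Δ. Then the restriction of Adj_{P,U}(x) to Λ_Δ = {x : x_Q = 0 for all facets Q ⊇ Δ} equals c_Δ^{-1} · (∏_{Q : Q ∩ Δ = ∅} x_Q) · Adj_{Δ,U_Δ}. Moreover, the residue res_{Λ_Δ} Amp_{P,U} := ((∏_{Q ⊇ Δ} x_Q) · Amp_{P,U})|_{Λ_Δ} equals c_Δ^{-1} · Amp_{Δ,U_Δ}. -/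

import Mathlib

open MvPolynomial Finset MeasureTheory
open scoped ENNReal

/-- The polyhedral cone spanned by the ray generators (rows of `U`) indexed by `σ`. -/
def coneOf {ι κ : Type*} [Fintype ι] (U : Matrix ι κ ℝ) (σ : Finset ι) : Set (κ → ℝ) :=
  {y | ∃ c : ι → ℝ, (∀ i, 0 ≤ c i) ∧ (∀ i, i ∉ σ → c i = 0) ∧ y = ∑ i, c i • U i}

/-- A simplicial polyhedral fan with rays indexed by `ι`, living in the space `κ → ℝ`.
Since the fan is simplicial, each cone is recorded by its finite set of rays. -/
structure SimplicialFan (ι κ : Type*) [Fintype ι] [DecidableEq ι] where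
  /-- the ray generator matrix: its rows are the chosen ray generators -/
  U : Matrix ι κ ℝ
  /-- the cones of the fan, each recorded by its set of rays -/
  cones : Finset (Finset ι)
  empty_mem : ∅ ∈ cones
  ray_mem : ∀ i : ι, {i} ∈ cones
  downward : ∀ σ ∈ cones, ∀ τ, τ ⊆ σ → τ ∈ cones
  indep : ∀ σ ∈ cones, LinearIndependent ℝ (fun i : σ => U i.1)
  inter : ∀ σ ∈ cones, ∀ τ ∈ cones, coneOf U σ ∩ coneOf U τ = coneOf U (σ ∩ τ)

/-- `|det|` of the square submatrix of `U` on the rows indexed by `σ`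
(zero if `σ` does not have exactly `card κ` elements). -/
noncomputable def absDetRows {ι κ : Type*} [Fintype κ] [DecidableEq κ]
    (U : Matrix ι κ ℝ) (σ : Finset ι) : ℝ :=
  if h : σ.card = Fintype.card κ then
    |(Matrix.of fun j k : κ =>
        U ((σ.equivFin.symm (Fintype.equivFinOfCardEq h.symm j)) : ι) k).det|
  else 0

/-- The universal adjoint polynomial of the fan data `(U, cones)`:
`Adj = ∑_{σ ∈ Σ(d)} |det U_σ| ∏_{ρ ∉ σ(1)} x_ρ`. -/
noncomputable def Adj {ι κ : Type*} [Fintype ι] [DecidableEq ι] [Fintype κ] [DecidableEq κ]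
    (U : Matrix ι κ ℝ) (cones : Finset (Finset ι)) : MvPolynomial ι ℝ :=
  ∑ σ ∈ cones.filter fun σ => σ.card = Fintype.card κ,
    MvPolynomial.C (absDetRows U σ) * ∏ ρ ∈ σᶜ, MvPolynomial.X ρ

/-- The toric amplitude `Amp = ∑_{σ ∈ Σ(d)} |det U_σ| / ∏_{ρ ∈ σ(1)} x_ρ`
as a real-valued function. -/
noncomputable def Amp {ι κ : Type*} [Fintype ι] [DecidableEq ι] [Fintype κ] [DecidableEq κ]
    (U : Matrix ι κ ℝ) (cones : Finset (Finset ι)) (x : ι → ℝ) : ℝ :=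
  ∑ σ ∈ cones.filter fun σ => σ.card = Fintype.card κ, absDetRows U σ / ∏ ρ ∈ σ, x ρ

/-- The toric amplitude with values in `ℝ≥0∞` (for identities with possibly infinite
dual volumes). -/
noncomputable def AmpE {ι κ : Type*} [Fintype ι] [DecidableEq ι] [Fintype κ] [DecidableEq κ]
    (U : Matrix ι κ ℝ) (cones : Finset (Finset ι)) (x : ι → ℝ) : ℝ≥0∞ :=
  ∑ σ ∈ cones.filter fun σ => σ.card = Fintype.card κ,
    ENNReal.ofReal (absDetRows U σ) / ∏ ρ ∈ σ, ENNReal.ofReal (x ρ)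

/-- The toric amplitude as an element of the field of rational functions. -/
noncomputable def AmpFrac {ι κ : Type*} [Fintype ι] [DecidableEq ι] [Fintype κ] [DecidableEq κ]
    (U : Matrix ι κ ℝ) (cones : Finset (Finset ι)) : FractionRing (MvPolynomial ι ℝ) :=
  ∑ σ ∈ cones.filter fun σ => σ.card = Fintype.card κ,
    algebraMap (MvPolynomial ι ℝ) (FractionRing (MvPolynomial ι ℝ)) (MvPolynomial.C (absDetRows U σ)) /
      algebraMap (MvPolynomial ι ℝ) (FractionRing (MvPolynomial ι ℝ)) (∏ ρ ∈ σ, MvPolynomial.X ρ)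

/-- The toric amplitude of fan data whose rays are indexed by a type `α` mapping to `ι`
via `f`, viewed inside the rational function field on the `ι`-variables. -/
noncomputable def AmpFracVia {α ι κ' : Type*} [Fintype α] [DecidableEq α]
    [Fintype κ'] [DecidableEq κ']
    (U' : Matrix α κ' ℝ) (cones' : Finset (Finset α)) (f : α → ι) :
    FractionRing (MvPolynomial ι ℝ) :=
  ∑ σ ∈ cones'.filter fun σ => σ.card = Fintype.card κ',
    algebraMap (MvPolynomial ι ℝ) (FractionRing (MvPolynomial ι ℝ)) (MvPolynomial.C (absDetRows U' σ)) /
      algebraMap (MvPolynomial ι ℝ) (FractionRing (MvPolynomial ι ℝ)) (∏ ρ ∈ σ, MvPolynomial.X (f ρ))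

/-- The polyhedron `P_z = {y : U y + z ≥ 0}`. -/
def Pz {ι κ : Type*} [Fintype κ] (U : Matrix ι κ ℝ) (z : ι → ℝ) : Set (κ → ℝ) :=
  {y | ∀ i, 0 ≤ (∑ j, U i j * y j) + z i}

/-- The face of `P_z` where the inequalities indexed by `τ` are tight. -/
def faceOf {ι κ : Type*} [Fintype κ] (U : Matrix ι κ ℝ) (z : ι → ℝ) (τ : Finset ι) :
    Set (κ → ℝ) :=
  {y | y ∈ Pz U z ∧ ∀ i ∈ τ, (∑ j, U i j * y j) + z i = 0}

/-- `F` is the normal fan of the polytope `P_z`, which is a full-dimensional simple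
(bounded) polytope whose facets are indexed by the rays of `F`: a set of inequalities
spans a cone of the normal fan iff they are simultaneously tight on a nonempty face. -/
def IsNormalFanOf {ι κ : Type*} [Fintype ι] [DecidableEq ι] [Fintype κ]
    (F : SimplicialFan ι κ) (z : ι → ℝ) : Prop :=
  Bornology.IsBounded (Pz F.U z) ∧ (interior (Pz F.U z)).Nonempty ∧
    ∀ σ : Finset ι, σ ∈ F.cones ↔ (faceOf F.U z σ).Nonempty

/-- The polar dual `{u : u ⬝ y ≥ -1 for all y ∈ P}`. -/
def polarDual {κ : Type*} [Fintype κ] (P : Set (κ → ℝ)) : Set (κ → ℝ) :=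
  {u | ∀ y ∈ P, -1 ≤ ∑ j, u j * y j}

/-- Warren's adjoint polynomial `adj_{P_z}(y) = Adj(U y + z)`. -/
noncomputable def warrenAdj {ι κ : Type*} [Fintype ι] [DecidableEq ι] [Fintype κ] [DecidableEq κ]
    (U : Matrix ι κ ℝ) (cones : Finset (Finset ι)) (z : ι → ℝ) : MvPolynomial κ ℝ :=
  MvPolynomial.aeval (fun i : ι => (∑ j, MvPolynomial.C (U i j) * MvPolynomial.X j) + MvPolynomial.C (z i))
    (Adj U cones)

/-- The neighbours `nb(τ)` of a cone `τ`: rays `ρ ∉ τ` with `τ ∪ {ρ}` a cone. -/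
def nbF {ι : Type*} [Fintype ι] [DecidableEq ι] (cones : Finset (Finset ι)) (τ : Finset ι) :
    Finset ι :=
  Finset.univ.filter fun ρ => ρ ∉ τ ∧ insert ρ τ ∈ cones

/-- The rows of `U * T` indexed by `τ` are the first `k` standard basis vectors. -/
def RowsStd {ι : Type*} {d : ℕ} (U : Matrix ι (Fin d) ℝ) (T : Matrix (Fin d) (Fin d) ℝ)
    (τ : Finset ι) (k : ℕ) : Prop :=
  ∃ g : {ρ : ι // ρ ∈ τ} → Fin d, Function.Injective g ∧ (∀ ρ, (g ρ : ℕ) < k) ∧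
    ∀ ρ : {ρ : ι // ρ ∈ τ}, (U * T) ρ.1 = Pi.single (g ρ) 1

/-- The ray matrix of the star fan `Σ_τ`: the last `d-k` columns of `U * T`, on the
rows indexed by `nb(τ)` (here `N`). -/
def starU {ι : Type*} {d : ℕ} (U : Matrix ι (Fin d) ℝ) (T : Matrix (Fin d) (Fin d) ℝ)
    (N : Finset ι) (k : ℕ) : Matrix {ρ : ι // ρ ∈ N} {j : Fin d // k ≤ (j : ℕ)} ℝ :=
  fun ρ j => (U * T) ρ.1 j.1

/-- The cones of the star fan `Σ_τ`, recorded by their sets of rays (as subsets of `N = nb(τ)`). -/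
def starCones {ι : Type*} [DecidableEq ι] (cones : Finset (Finset ι)) (τ : Finset ι)
    (N : Finset ι) : Finset (Finset {ρ : ι // ρ ∈ N}) :=
  (cones.filter fun σ => τ ⊆ σ).image fun σ => (σ \ τ).subtype fun ρ => ρ ∈ N

/-- Restriction of polynomials to the coordinate subspace `Λ_τ = {x_ρ = 0, ρ ∈ τ}`. -/
noncomputable def restrictTo {ι : Type*} {R : Type*} [CommSemiring R] [DecidableEq ι]
    (τ : Finset ι) : MvPolynomial ι R →ₐ[R] MvPolynomial ι R :=
  MvPolynomial.aeval fun ρ => if ρ ∈ τ then 0 else MvPolynomial.X ρ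

/-- The deformation cone of a (complete simplicial) fan: those `x` for which each
"virtual vertex" of `P_x` determined by a maximal cone satisfies all inequalities. -/
def DefCone {ι κ : Type*} [Fintype ι] [DecidableEq ι] [Fintype κ] (F : SimplicialFan ι κ) :
    Set (ι → ℝ) :=
  {x | ∀ σ ∈ F.cones, σ.card = Fintype.card κ →
    ∃ v : κ → ℝ, (∀ ρ ∈ σ, (∑ j, F.U ρ j * v j) + x ρ = 0) ∧
      ∀ ρ : ι, 0 ≤ (∑ j, F.U ρ j * v j) + x ρ}

/-- The `(d+1) × (d+1)` determinant `W_Δ(x)` of the matrix with rows `(u_ρ, x_ρ)`,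
`ρ ∈ S` (defined up to sign; zero if `S` does not have `d+1` elements). -/
noncomputable def Wdet {ι κ : Type*} [Fintype κ] [DecidableEq κ]
    (U : Matrix ι κ ℝ) (S : Finset ι) (x : ι → ℝ) : ℝ :=
  if h : S.card = Fintype.card (Option κ) then
    (Matrix.of fun a b : Option κ =>
      Option.elim b (x ((S.equivFin.symm (Fintype.equivFinOfCardEq h.symm a)) : ι))
        (fun k => U ((S.equivFin.symm (Fintype.equivFinOfCardEq h.symm a)) : ι) k)).det
  else 0


section StatementTwoHelpers

open MvPolynomial Finset

lemma abs_det_submatrix' {m β : Type*} [DecidableEq m] [Fintype m] [DecidableEq β] [Fintype β]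
    (A : Matrix m m ℝ) (e1 e2 : β ≃ m) :
    |(A.submatrix e1 e2).det| = |A.det| := by
  have h : A.submatrix e1 e2 = (A.submatrix e2 e2).submatrix (e1.trans e2.symm) id := by
    ext b b'; simp [Matrix.submatrix_apply]
  rw [h, Matrix.det_permute (e1.trans e2.symm), Matrix.det_submatrix_equiv_self, abs_mul]
  rcases Int.units_eq_one_or (Equiv.Perm.sign (e1.trans e2.symm)) with h' | h' <;>
    rw [h'] <;> norm_num

lemma absDetRows_eq' {ι κ : Type*} [Fintype κ] [DecidableEq κ]
    (U : Matrix ι κ ℝ) (σ : Finset ι) (h : σ.card = Fintype.card κ) (e : κ ≃ {x // x ∈ σ}) :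
    absDetRows U σ = |(Matrix.of fun j k : κ => U (e j : ι) k).det| := by
  rw [absDetRows, dif_pos h]
  set e1 : κ ≃ {x // x ∈ σ} := (Fintype.equivFinOfCardEq h.symm).trans σ.equivFin.symm with he1
  have h2 : (Matrix.of fun j k : κ => U (e j : ι) k) =
      (Matrix.of fun j k : κ => U (e1 j : ι) k).submatrix (e.trans e1.symm) (Equiv.refl κ) := by
    ext j k; simp [Matrix.submatrix_apply, he1]
  rw [h2, abs_det_submatrix']
  rfl

lemma cardLt' {d k : ℕ} (hkd : k ≤ d) : Fintype.card {j : Fin d // (j : ℕ) < k} = k := by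
  rw [Fintype.card_congr (⟨fun j => ⟨j.1.1, j.2⟩, fun i => ⟨⟨i.1, lt_of_lt_of_le i.2 hkd⟩, i.2⟩,
    fun j => by ext; rfl, fun i => by ext; rfl⟩ : {j : Fin d // (j : ℕ) < k} ≃ Fin k),
    Fintype.card_fin]

lemma cardGe' {d k : ℕ} (hkd : k ≤ d) : Fintype.card {j : Fin d // k ≤ (j : ℕ)} = d - k := by
  rw [Fintype.card_congr (⟨fun j => ⟨j.1.1 - k, by have := j.1.2; have := j.2; omega⟩,
    fun i => ⟨⟨i.1 + k, by have := i.2; omega⟩, by simp⟩,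
    fun j => by ext; have := j.2; simp; omega, fun i => by ext; simp⟩ :
      {j : Fin d // k ≤ (j : ℕ)} ≃ Fin (d - k)), Fintype.card_fin]

lemma det_key' {ι : Type*} [DecidableEq ι] {d k : ℕ}
    (U : Matrix ι (Fin d) ℝ) (T : Matrix (Fin d) (Fin d) ℝ)
    (τ σ N : Finset ι) (hk : τ.card = k) (hkd : k ≤ d)
    (hτσ : τ ⊆ σ) (hσN : σ \ τ ⊆ N) (hσd : σ.card = d)
    (hT : RowsStd U T τ k) :
    absDetRows (U * T) σ = absDetRows (starU U T N k) ((σ \ τ).subtype (· ∈ N)) := by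
  classical
  obtain ⟨g, ginj, glt, hrows⟩ := hT
  set σ' := (σ \ τ).subtype (· ∈ N) with hσ'
  have hfilter : (σ \ τ).filter (· ∈ N) = σ \ τ := Finset.filter_true_of_mem (fun x hx => hσN hx)
  have hσ'card : σ'.card = d - k := by
    rw [hσ', Finset.card_subtype, hfilter, Finset.card_sdiff_of_subset hτσ, hk, hσd]
  have hσcardκ : σ.card = Fintype.card (Fin d) := by simp [hσd]
  have hσ'cardκ : σ'.card = Fintype.card {j : Fin d // k ≤ (j : ℕ)} := by
    rw [hσ'card, cardGe' hkd]
  have hcardτ : Fintype.card {ρ : ι // ρ ∈ τ} = Fintype.card {j : Fin d // (j : ℕ) < k} := by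
    rw [cardLt' hkd, Fintype.card_coe, hk]
  set g' : {ρ : ι // ρ ∈ τ} ≃ {j : Fin d // (j : ℕ) < k} :=
    Equiv.ofBijective (fun ρ => ⟨g ρ, glt ρ⟩)
      ((Fintype.bijective_iff_injective_and_card _).mpr
        ⟨fun a b hab => ginj (by simpa [Subtype.ext_iff] using hab), hcardτ⟩) with hg'
  have hg'val : ∀ j : {j : Fin d // (j : ℕ) < k}, g (g'.symm j) = j.1 := by
    intro j
    exact congrArg Subtype.val (g'.apply_symm_apply j)
  set nlt : {j : Fin d // ¬ (j : ℕ) < k} ≃ {j : Fin d // k ≤ (j : ℕ)} :=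
    Equiv.subtypeEquivRight (fun j => not_lt) with hnlt
  have he₀card : Fintype.card {j : Fin d // k ≤ (j : ℕ)} = Fintype.card {x // x ∈ σ'} := by
    rw [cardGe' hkd, Fintype.card_coe, hσ'card]
  set e₀ : {j : Fin d // k ≤ (j : ℕ)} ≃ {x // x ∈ σ'} := Fintype.equivOfCardEq he₀card with he₀
  have he₀mem : ∀ j, ((e₀ j : {ρ : ι // ρ ∈ N}) : ι) ∈ σ \ τ := by
    intro j
    exact Finset.mem_subtype.mp (e₀ j).2
  set rfun : {j : Fin d // (j : ℕ) < k} ⊕ {j : Fin d // ¬ (j : ℕ) < k} → {x // x ∈ σ} :=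
    Sum.elim (fun j => ⟨(g'.symm j).1, hτσ (g'.symm j).2⟩)
      (fun j => ⟨((e₀ (nlt j) : {ρ : ι // ρ ∈ N}) : ι),
        (Finset.mem_sdiff.mp (he₀mem (nlt j))).1⟩) with hrfun
  have hrinj : Function.Injective rfun := by
    rintro (a | a) (b | b) hab
    · simp only [hrfun, Sum.elim_inl, Subtype.ext_iff] at hab
      have := g'.symm.injective (Subtype.ext hab)
      rw [this]
    · exfalso
      simp only [hrfun, Sum.elim_inl, Sum.elim_inr, Subtype.ext_iff] at hab
      have h1 : ((g'.symm a) : ι) ∈ τ := (g'.symm a).2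
      have h2 := (Finset.mem_sdiff.mp (he₀mem (nlt b))).2
      rw [hab] at h1; exact h2 h1
    · exfalso
      simp only [hrfun, Sum.elim_inl, Sum.elim_inr, Subtype.ext_iff] at hab
      have h1 : ((g'.symm b) : ι) ∈ τ := (g'.symm b).2
      have h2 := (Finset.mem_sdiff.mp (he₀mem (nlt a))).2
      rw [← hab] at h1; exact h2 h1
    · simp only [hrfun, Sum.elim_inr, Subtype.ext_iff] at hab
      have := e₀.injective (Subtype.ext (Subtype.ext hab))
      have := nlt.injective this
      rw [this]
  have hcardβ : Fintype.card ({j : Fin d // (j : ℕ) < k} ⊕ {j : Fin d // ¬ (j : ℕ) < k})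
      = Fintype.card {x // x ∈ σ} := by
    rw [Fintype.card_sum, cardLt' hkd, Fintype.card_congr nlt, cardGe' hkd, Fintype.card_coe, hσd]
    omega
  set rowE := Equiv.ofBijective rfun ((Fintype.bijective_iff_injective_and_card _).mpr
    ⟨hrinj, hcardβ⟩) with hrowE
  set colE := Equiv.sumCompl (fun j : Fin d => (j : ℕ) < k) with hcolE
  set Dm : Matrix {j : Fin d // ¬ (j : ℕ) < k} {j : Fin d // ¬ (j : ℕ) < k} ℝ :=
    Matrix.of fun j j' => (U * T) ((e₀ (nlt j) : {ρ : ι // ρ ∈ N}) : ι) j'.1 with hDm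
  set Cm : Matrix {j : Fin d // ¬ (j : ℕ) < k} {j : Fin d // (j : ℕ) < k} ℝ :=
    Matrix.of fun j j' => (U * T) ((e₀ (nlt j) : {ρ : ι // ρ ∈ N}) : ι) j'.1 with hCm
  set M₂ : Matrix ({j : Fin d // (j : ℕ) < k} ⊕ {j : Fin d // ¬ (j : ℕ) < k})
      ({j : Fin d // (j : ℕ) < k} ⊕ {j : Fin d // ¬ (j : ℕ) < k}) ℝ :=
    Matrix.of fun b b' => (U * T) ((rowE b) : ι) (colE b') with hM₂
  have hblocks : M₂ = Matrix.fromBlocks 1 0 Cm Dm := by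
    ext b b'
    rcases b with a | a <;> rcases b' with b | b
    · show (U * T) ((g'.symm a) : ι) b.1 = (1 : Matrix _ _ ℝ) a b
      rw [hrows (g'.symm a), hg'val a]
      simp [Pi.single_apply, Matrix.one_apply, Subtype.ext_iff, eq_comm]
    · show (U * T) ((g'.symm a) : ι) b.1 = (0 : Matrix _ _ ℝ) a b
      rw [hrows (g'.symm a), hg'val a]
      have hne : b.1 ≠ a.1 := by
        intro hc
        exact b.2 (by rw [hc]; exact a.2)
      simp [Pi.single_eq_of_ne hne]
    · rfl
    · rfl
  have step2 : absDetRows (U * T) σ = |M₂.det| := by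
    rw [absDetRows_eq' (U * T) σ hσcardκ (colE.symm.trans rowE)]
    have : (Matrix.of fun j c : Fin d => (U * T) (((colE.symm.trans rowE) j) : ι) c) =
        M₂.submatrix colE.symm colE.symm := by
      ext j c
      simp [hM₂, Matrix.submatrix_apply]
    rw [this, abs_det_submatrix']
  have step3 : |M₂.det| = |Dm.det| := by
    rw [hblocks, Matrix.det_fromBlocks_zero₁₂, Matrix.det_one, one_mul]
  have step4 : |Dm.det| = absDetRows (starU U T N k) σ' := by
    rw [absDetRows_eq' (starU U T N k) σ' hσ'cardκ e₀]
    have : Dm = (Matrix.of fun a b : {j : Fin d // k ≤ (j : ℕ)} =>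
        starU U T N k ((e₀ a : {x // x ∈ σ'}) : {ρ : ι // ρ ∈ N}) b).submatrix nlt nlt := by
      ext j j'
      simp [hDm, Matrix.submatrix_apply, starU, hnlt]
    rw [this, abs_det_submatrix']
  rw [step2, step3, step4]

lemma det_mul_key' {ι : Type*} [DecidableEq ι] {d : ℕ}
    (U : Matrix ι (Fin d) ℝ) (T : Matrix (Fin d) (Fin d) ℝ) (σ : Finset ι)
    (hσd : σ.card = d) :
    absDetRows (U * T) σ = absDetRows U σ * |T.det| := by
  have hσcardκ : σ.card = Fintype.card (Fin d) := by simp [hσd]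
  have e : Fin d ≃ {x // x ∈ σ} :=
    Fintype.equivOfCardEq (by rw [Fintype.card_fin, Fintype.card_coe, hσd])
  rw [absDetRows_eq' (U * T) σ hσcardκ e, absDetRows_eq' U σ hσcardκ e]
  have : (Matrix.of fun j c : Fin d => (U * T) ((e j) : ι) c) =
      (Matrix.of fun j c : Fin d => U ((e j) : ι) c) * T := by
    ext j c
    simp [Matrix.mul_apply]
  rw [this, Matrix.det_mul, abs_mul]

lemma part1' {ι : Type*} [Fintype ι] [DecidableEq ι] {d k : ℕ}
    (U : Matrix ι (Fin d) ℝ) (cones : Finset (Finset ι)) (T : Matrix (Fin d) (Fin d) ℝ)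
    (τ N : Finset ι) (hk : τ.card = k) (hkd : k ≤ d)
    (hNτ : ∀ ρ ∈ N, ρ ∉ τ) (hsub : ∀ σ ∈ cones, τ ⊆ σ → σ \ τ ⊆ N)
    (hdk : ∀ σ ∈ cones, τ ⊆ σ → σ.card = d →
      absDetRows U σ = |T.det|⁻¹ * absDetRows (starU U T N k) ((σ \ τ).subtype (· ∈ N))) :
    restrictTo τ (Adj U cones) =
      MvPolynomial.C |T.det|⁻¹ * (∏ ρ ∈ (N ∪ τ)ᶜ, MvPolynomial.X ρ) *
        MvPolynomial.rename Subtype.val (Adj (starU U T N k) (starCones cones τ N)) := by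
  classical
  have recover : ∀ σ₀ ∈ cones, τ ⊆ σ₀ →
      τ ∪ ((σ₀ \ τ).subtype (· ∈ N)).map (Function.Embedding.subtype _) = σ₀ := by
    intro σ₀ h₀ hτ₀
    rw [Finset.subtype_map, Finset.filter_true_of_mem (fun x hx => hsub σ₀ h₀ hτ₀ hx),
      Finset.union_sdiff_of_subset hτ₀]
  rw [restrictTo, Adj, map_sum]
  simp only [map_mul, aeval_C, MvPolynomial.algebraMap_eq, map_prod, aeval_X]
  have step1 : ∑ σ ∈ cones.filter (fun σ => σ.card = Fintype.card (Fin d)),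
      MvPolynomial.C (absDetRows U σ) * ∏ ρ ∈ σᶜ, (if ρ ∈ τ then 0 else MvPolynomial.X ρ) =
      ∑ σ ∈ cones.filter (fun σ => σ.card = Fintype.card (Fin d) ∧ τ ⊆ σ),
      MvPolynomial.C (absDetRows U σ) * ∏ ρ ∈ σᶜ, MvPolynomial.X ρ := by
    rw [← Finset.filter_filter, Finset.sum_filter (fun σ => τ ⊆ σ)]
    refine Finset.sum_congr rfl fun σ hσ => ?_
    by_cases h : τ ⊆ σ
    · rw [if_pos h]
      refine congrArg _ (Finset.prod_congr rfl fun ρ hρ => ?_)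
      rw [if_neg (fun hc => (Finset.mem_compl.mp hρ) (h hc))]
    · rw [if_neg h]
      obtain ⟨ρ, hρτ, hρσ⟩ := Finset.not_subset.mp h
      refine mul_eq_zero_of_right _ (Finset.prod_eq_zero (Finset.mem_compl.mpr hρσ) ?_)
      rw [if_pos hρτ]
  rw [step1]
  rw [Adj, map_sum, Finset.mul_sum]
  simp only [map_mul, rename_C, map_prod, rename_X]
  refine Finset.sum_nbij' (fun σ => (σ \ τ).subtype (· ∈ N))
    (fun σ' => τ ∪ σ'.map (Function.Embedding.subtype _)) ?_ ?_ ?_ ?_ ?_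
  · intro σ hσ
    rw [Finset.mem_filter] at hσ ⊢
    obtain ⟨hσc, hστ⟩ := hσ
    obtain ⟨hcd, hτσ⟩ := hστ
    constructor
    · exact Finset.mem_image.mpr ⟨σ, Finset.mem_filter.mpr ⟨hσc, hτσ⟩, rfl⟩
    · rw [Finset.card_subtype, Finset.filter_true_of_mem (fun x hx => hsub σ hσc hτσ hx),
        Finset.card_sdiff_of_subset hτσ, hk, cardGe' hkd]
      rw [Fintype.card_fin] at hcd
      rw [hcd]
  · intro σ' hσ'
    rw [Finset.mem_filter] at hσ'
    obtain ⟨hσ'i, hσ'c⟩ := hσ'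
    obtain ⟨σ₀, hσ₀, hσ₀e⟩ := Finset.mem_image.mp hσ'i
    rw [Finset.mem_filter] at hσ₀
    rw [← hσ₀e, recover σ₀ hσ₀.1 hσ₀.2, Finset.mem_filter]
    refine ⟨hσ₀.1, ?_, hσ₀.2⟩
    have h1 : σ₀.card = τ.card + (σ₀ \ τ).card := by
      rw [Finset.card_sdiff_of_subset hσ₀.2]
      have := Finset.card_le_card hσ₀.2
      omega
    have h2 : (σ₀ \ τ).card = σ'.card := by
      rw [← hσ₀e, Finset.card_subtype,
        Finset.filter_true_of_mem (fun x hx => hsub σ₀ hσ₀.1 hσ₀.2 hx)]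
    rw [Fintype.card_fin, h1, h2, hσ'c, cardGe' hkd, hk]
    omega
  · intro σ hσ
    rw [Finset.mem_filter] at hσ
    exact recover σ hσ.1 hσ.2.2
  · intro σ' hσ'
    rw [Finset.mem_filter] at hσ'
    obtain ⟨σ₀, hσ₀, hσ₀e⟩ := Finset.mem_image.mp hσ'.1
    rw [Finset.mem_filter] at hσ₀
    rw [← hσ₀e, recover σ₀ hσ₀.1 hσ₀.2]
  · intro σ hσ
    rw [Finset.mem_filter] at hσ
    obtain ⟨hσc, hστ⟩ := hσ
    obtain ⟨hcd, hτσ⟩ := hστ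
    rw [Fintype.card_fin] at hcd
    set σ' := (σ \ τ).subtype (· ∈ N) with hσ'def
    have hdeteq := hdk σ hσc hτσ hcd
    have hmapeq : σ'ᶜ.map (Function.Embedding.subtype (· ∈ N)) = N \ σ := by
      ext ρ
      simp only [Finset.mem_map, Function.Embedding.coe_subtype, Finset.mem_compl,
        Finset.mem_sdiff, hσ'def, Finset.mem_subtype, Subtype.exists, exists_and_left,
        exists_prop, exists_eq_right_right]
      constructor
      · rintro ⟨h1, h2⟩
        exact ⟨h2, fun hσρ => h1 ⟨hσρ, hNτ ρ h2⟩⟩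
      · rintro ⟨h1, h2⟩
        exact ⟨fun hc => h2 hc.1, h1⟩
    have hprodeq : (∏ ρ' ∈ σ'ᶜ, MvPolynomial.X (ρ' : ι)) =
        ∏ ρ ∈ N \ σ, (MvPolynomial.X ρ : MvPolynomial ι ℝ) := by
      rw [← hmapeq, Finset.prod_map]
      rfl
    have hdisj : Disjoint ((N ∪ τ)ᶜ) (N \ σ) := by
      rw [Finset.disjoint_left]
      intro ρ h1 h2
      exact (Finset.mem_compl.mp h1) (Finset.mem_union_left _ (Finset.mem_sdiff.mp h2).1)
    have huni : (N ∪ τ)ᶜ ∪ (N \ σ) = σᶜ := by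
      ext ρ
      simp only [Finset.mem_union, Finset.mem_compl, Finset.mem_sdiff]
      have hρ1 : ρ ∈ σ → ρ ∈ τ ∨ ρ ∈ N := fun h =>
        if hτ' : ρ ∈ τ then Or.inl hτ'
        else Or.inr (hsub σ hσc hτσ (Finset.mem_sdiff.mpr ⟨h, hτ'⟩))
      have hρ2 : ρ ∈ τ → ρ ∈ σ := fun h => hτσ h
      tauto
    have hsplit : (∏ ρ ∈ σᶜ, MvPolynomial.X ρ : MvPolynomial ι ℝ) =
        (∏ ρ ∈ (N ∪ τ)ᶜ, MvPolynomial.X ρ) * ∏ ρ ∈ N \ σ, MvPolynomial.X ρ := by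
      rw [← huni, Finset.prod_union hdisj]
    rw [hdeteq, hprodeq, hsplit, MvPolynomial.C_mul]
    ring

noncomputable abbrev φι (ι : Type*) [Fintype ι] [DecidableEq ι] :
    MvPolynomial ι ℝ →+* FractionRing (MvPolynomial ι ℝ) :=
  algebraMap (MvPolynomial ι ℝ) (FractionRing (MvPolynomial ι ℝ))

variable {ι : Type*} [Fintype ι] [DecidableEq ι]

lemma phi_inj : Function.Injective (φι ι) := IsFractionRing.injective _ _

lemma phi_prodX_ne {s : Finset ι} : (φι ι) (∏ ρ ∈ s, MvPolynomial.X ρ) ≠ 0 := by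
  rw [map_ne_zero_iff _ phi_inj]
  exact Finset.prod_ne_zero_iff.mpr fun ρ _ => MvPolynomial.X_ne_zero _

lemma L2' {κ : Type*} [Fintype κ] [DecidableEq κ] (U : Matrix ι κ ℝ)
    (cones : Finset (Finset ι)) (τ : Finset ι) :
    (∏ ρ ∈ τ, (φι ι) (MvPolynomial.X ρ)) * AmpFrac U cones =
      (φι ι) (Adj U cones) / (φι ι) (∏ ρ ∈ τᶜ, MvPolynomial.X ρ) := by
  rw [AmpFrac, Finset.mul_sum, Adj, map_sum, Finset.sum_div]
  refine Finset.sum_congr rfl fun σ _ => ?_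
  rw [← map_prod, mul_div_assoc', div_eq_div_iff phi_prodX_ne phi_prodX_ne]
  simp only [← map_mul]
  refine congrArg _ ?_
  have h1 := Finset.prod_mul_prod_compl τ (fun ρ => (MvPolynomial.X ρ : MvPolynomial ι ℝ))
  have h2 := Finset.prod_mul_prod_compl σ (fun ρ => (MvPolynomial.X ρ : MvPolynomial ι ℝ))
  linear_combination (MvPolynomial.C (absDetRows U σ) : MvPolynomial ι ℝ) * h1 -
    (MvPolynomial.C (absDetRows U σ) : MvPolynomial ι ℝ) * h2

lemma L3' {d k : ℕ} (N τ : Finset ι) (hNτ : ∀ ρ ∈ N, ρ ∉ τ)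
    (c : ℝ)
    (U' : Matrix {ρ : ι // ρ ∈ N} {j : Fin d // k ≤ (j : ℕ)} ℝ)
    (cones' : Finset (Finset {ρ : ι // ρ ∈ N})) :
    (φι ι) (MvPolynomial.C c * (∏ ρ ∈ (N ∪ τ)ᶜ, MvPolynomial.X ρ) *
        MvPolynomial.rename Subtype.val (Adj U' cones')) =
      (φι ι) (∏ ρ ∈ τᶜ, MvPolynomial.X ρ) *
        ((φι ι) (MvPolynomial.C c) * AmpFracVia U' cones' Subtype.val) := by
  have hNsplit : (N ∪ τ)ᶜ ∪ N = τᶜ := by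
    ext ρ
    simp only [Finset.mem_union, Finset.mem_compl]
    have := hNτ ρ
    tauto
  have hNdisj : Disjoint ((N ∪ τ)ᶜ) N := by
    rw [Finset.disjoint_left]
    intro ρ h1 h2
    exact (Finset.mem_compl.mp h1) (Finset.mem_union_left _ h2)
  rw [Adj]
  rw [map_sum (MvPolynomial.rename (Subtype.val : {ρ : ι // ρ ∈ N} → ι))]
  rw [Finset.mul_sum]
  rw [map_sum (φι ι)]
  rw [AmpFracVia]
  rw [Finset.mul_sum]
  rw [Finset.mul_sum]
  refine Finset.sum_congr rfl fun σ' _ => ?_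
  simp only [map_mul, map_prod, rename_C, rename_X]
  have hne : (∏ x ∈ σ', (algebraMap (MvPolynomial ι ℝ) (FractionRing (MvPolynomial ι ℝ)))
      (MvPolynomial.X (x : ι))) ≠ 0 :=
    Finset.prod_ne_zero_iff.mpr fun x _ => by
      rw [map_ne_zero_iff _ phi_inj]; exact MvPolynomial.X_ne_zero _
  rw [mul_div_assoc', mul_div_assoc', eq_div_iff hne]
  simp only [← map_prod, ← map_mul]
  refine congrArg _ ?_
  have h1 := Finset.prod_mul_prod_compl σ' (fun ρ' => (MvPolynomial.X ρ'.1 : MvPolynomial ι ℝ))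
  have h2 : (∏ ρ' : {ρ : ι // ρ ∈ N}, (MvPolynomial.X ρ'.1 : MvPolynomial ι ℝ)) =
      ∏ ρ ∈ N, MvPolynomial.X ρ := Finset.prod_coe_sort N (fun ρ => MvPolynomial.X ρ)
  have h3 : (∏ ρ ∈ τᶜ, (MvPolynomial.X ρ : MvPolynomial ι ℝ)) =
      (∏ ρ ∈ (N ∪ τ)ᶜ, MvPolynomial.X ρ) * ∏ ρ ∈ N, MvPolynomial.X ρ := by
    rw [← hNsplit, Finset.prod_union hNdisj]
  set lc : MvPolynomial ι ℝ := MvPolynomial.C c * MvPolynomial.C (absDetRows U' σ') with hlc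
  have h4 : (MvPolynomial.C (c * absDetRows U' σ') : MvPolynomial ι ℝ) =
      MvPolynomial.C c * MvPolynomial.C (absDetRows U' σ') := MvPolynomial.C_mul
  linear_combination lc * (∏ ρ ∈ (N ∪ τ)ᶜ, (MvPolynomial.X ρ : MvPolynomial ι ℝ)) * h1 +
    lc * (∏ ρ ∈ (N ∪ τ)ᶜ, (MvPolynomial.X ρ : MvPolynomial ι ℝ)) * h2 - lc * h3 -
    (∏ ρ ∈ τᶜ, (MvPolynomial.X ρ : MvPolynomial ι ℝ)) * h4

end StatementTwoHelpers

/-- (Restriction and residue along a face of a simple polytope.)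
Let `P` be a full-dimensional simple polytope with normal fan `Σ` and let `Δ` be the
face of `P` of codimension `k` whose normal cone is `τ ∈ Σ(k)`; the facets containing
`Δ` are indexed by `τ` and the facets `Q` with `Q ∩ Δ` a facet of `Δ` are indexed by
`nb(τ)`. With `T_Δ`, `c_Δ = |det T_Δ|` and `U_Δ` as in the restriction lemma:
the restriction of `Adj_P` to `Λ_Δ` is `c_Δ⁻¹ (∏_{Q ∩ Δ = ∅} x_Q) Adj_{Δ,U_Δ}`, and
the residue of `Amp_P` along `Λ_Δ` (computed on any representation `p/q` of
`(∏_{Q ⊇ Δ} x_Q)·Amp_P` whose denominator survives restriction) is `c_Δ⁻¹·Amp_{Δ,U_Δ}`. -/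
theorem statement2 {ι : Type*} [Fintype ι] [DecidableEq ι] {d k : ℕ}
    (F : SimplicialFan ι (Fin d)) (hrank : F.U.rank = d)
    (z : ι → ℝ) (hz : IsNormalFanOf F z)
    (τ : Finset ι) (hτ : τ ∈ F.cones) (hcard : τ.card = k)
    (T : Matrix (Fin d) (Fin d) ℝ) (hdet : T.det ≠ 0) (hT : RowsStd F.U T τ k) :
    (restrictTo τ (Adj F.U F.cones) =
      MvPolynomial.C |T.det|⁻¹ * (∏ ρ ∈ (nbF F.cones τ ∪ τ)ᶜ, MvPolynomial.X ρ) *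
        MvPolynomial.rename Subtype.val
          (Adj (starU F.U T (nbF F.cones τ) k) (starCones F.cones τ (nbF F.cones τ)))) ∧
    ∀ p q : MvPolynomial ι ℝ, restrictTo τ q ≠ 0 →
      algebraMap (MvPolynomial ι ℝ) (FractionRing (MvPolynomial ι ℝ)) p /
          algebraMap (MvPolynomial ι ℝ) (FractionRing (MvPolynomial ι ℝ)) q =
        (∏ ρ ∈ τ, algebraMap (MvPolynomial ι ℝ) (FractionRing (MvPolynomial ι ℝ))
            (MvPolynomial.X ρ)) * AmpFrac F.U F.cones →
      algebraMap (MvPolynomial ι ℝ) (FractionRing (MvPolynomial ι ℝ)) (restrictTo τ p) =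
        algebraMap (MvPolynomial ι ℝ) (FractionRing (MvPolynomial ι ℝ)) (restrictTo τ q) *
          (algebraMap (MvPolynomial ι ℝ) (FractionRing (MvPolynomial ι ℝ))
              (MvPolynomial.C |T.det|⁻¹) *
            AmpFracVia (starU F.U T (nbF F.cones τ) k) (starCones F.cones τ (nbF F.cones τ))
              Subtype.val) := by
  classical
  set N := nbF F.cones τ with hN
  have hNτ : ∀ ρ ∈ N, ρ ∉ τ := fun ρ h => (Finset.mem_filter.mp h).2.1
  have hsub : ∀ σ ∈ F.cones, τ ⊆ σ → σ \ τ ⊆ N := by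
    intro σ hσ hτσ ρ hρ
    rw [Finset.mem_sdiff] at hρ
    exact Finset.mem_filter.mpr ⟨Finset.mem_univ _, hρ.2,
      F.downward σ hσ (insert ρ τ) (Finset.insert_subset hρ.1 hτσ)⟩
  have hkd : k ≤ d := by
    have h := (F.indep τ hτ).fintype_card_le_finrank
    rw [Module.finrank_fintype_fun_eq_card, Fintype.card_fin, Fintype.card_coe, hcard] at h
    exact h
  have habs : |T.det| ≠ 0 := abs_ne_zero.mpr hdet
  have hdk : ∀ σ ∈ F.cones, τ ⊆ σ → σ.card = d →
      absDetRows F.U σ = |T.det|⁻¹ * absDetRows (starU F.U T N k) ((σ \ τ).subtype (· ∈ N)) := by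
    intro σ hσ hτσ hσd
    have h2 := det_key' F.U T τ σ N hcard hkd hτσ (hsub σ hσ hτσ) hσd hT
    have h1 := det_mul_key' F.U T σ hσd
    rw [← h2, h1]
    field_simp
  have hP1 : restrictTo τ (Adj F.U F.cones) =
      MvPolynomial.C |T.det|⁻¹ * (∏ ρ ∈ (N ∪ τ)ᶜ, MvPolynomial.X ρ) *
        MvPolynomial.rename Subtype.val
          (Adj (starU F.U T N k) (starCones F.cones τ N)) := by
    have hNuτ : nbF F.cones τ ∪ τ = N ∪ τ := rfl
    exact part1' F.U F.cones T τ N hcard hkd hNτ hsub hdk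
  refine ⟨hP1, ?_⟩
  intro p q hq heq
  have hq0 : q ≠ 0 := fun h => hq (by rw [h, map_zero])
  have hφq : (φι ι) q ≠ 0 := by rw [map_ne_zero_iff _ phi_inj]; exact hq0
  have hkey := heq.trans (L2' F.U F.cones τ)
  rw [div_eq_div_iff hφq phi_prodX_ne] at hkey
  have hpoly : p * ∏ ρ ∈ τᶜ, MvPolynomial.X ρ = Adj F.U F.cones * q := by
    apply phi_inj
    rw [map_mul, map_mul]
    exact hkey
  have hres := congrArg (restrictTo τ) hpoly
  rw [map_mul, map_mul] at hres
  have hresprod : restrictTo τ (∏ ρ ∈ τᶜ, MvPolynomial.X ρ) =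
      ∏ ρ ∈ τᶜ, (MvPolynomial.X ρ : MvPolynomial ι ℝ) := by
    rw [restrictTo, map_prod]
    refine Finset.prod_congr rfl fun ρ hρ => ?_
    rw [aeval_X, if_neg (Finset.mem_compl.mp hρ)]
  rw [hresprod, hP1] at hres
  have hL3 := L3' N τ hNτ |T.det|⁻¹ (starU F.U T N k) (starCones F.cones τ N)
  refine mul_right_cancel₀ (phi_prodX_ne (s := τᶜ)) ?_
  calc (φι ι) (restrictTo τ p) * (φι ι) (∏ ρ ∈ τᶜ, MvPolynomial.X ρ)
      = (φι ι) (restrictTo τ p * ∏ ρ ∈ τᶜ, MvPolynomial.X ρ) := (map_mul _ _ _).symm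
    _ = (φι ι) ((MvPolynomial.C |T.det|⁻¹ * (∏ ρ ∈ (N ∪ τ)ᶜ, MvPolynomial.X ρ) *
          MvPolynomial.rename Subtype.val
            (Adj (starU F.U T N k) (starCones F.cones τ N))) * restrictTo τ q) :=
        congrArg _ hres
    _ = (φι ι) (MvPolynomial.C |T.det|⁻¹ * (∏ ρ ∈ (N ∪ τ)ᶜ, MvPolynomial.X ρ) *
          MvPolynomial.rename Subtype.val
            (Adj (starU F.U T N k) (starCones F.cones τ N))) * (φι ι) (restrictTo τ q) :=
        map_mul _ _ _
    _ = ((φι ι) (∏ ρ ∈ τᶜ, MvPolynomial.X ρ) *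
          ((φι ι) (MvPolynomial.C |T.det|⁻¹) *
            AmpFracVia (starU F.U T N k) (starCones F.cones τ N) Subtype.val)) *
          (φι ι) (restrictTo τ q) := by rw [hL3]
    _ = (φι ι) (restrictTo τ q) *
          ((φι ι) (MvPolynomial.C |T.det|⁻¹) *
            AmpFracVia (starU F.U T N k) (starCones F.cones τ N) Subtype.val) *
          (φι ι) (∏ ρ ∈ τᶜ, MvPolynomial.X ρ) := by ring
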